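/- Every 2-connected graph on at least 3 vertices contains a heavy cycle, i.e., a cycle passing through every vertex of degree at least n/2, where n is the number of vertices. -/

import Mathlib

open SimpleGraph

/-- A vertex is heavy if its degree is at least half the number of vertices. -/
def Heavy {V : Type*} [Fintype V] (G : SimpleGraph V) (v : V) : Prop :=
  Fintype.card V ≤ 2 * (G.neighborSet v).ncard

/-- `{x,y} ∈ Ẽ(G)`: distinct vertices that are adjacent or have degree sum at least `n`. -/
def TEdge {V : Type*} [Fintype V] (G : SimpleGraph V) (x y : V) : Prop :=
  x ≠ y ∧ (G.Adj x y ∨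
    Fintype.card V ≤ (G.neighborSet x).ncard + (G.neighborSet y).ncard)

/-- `a` is the center and `b,c,d` the end vertices of an induced claw `K_{1,3}`. -/
def IsClaw {V : Type*} (G : SimpleGraph V) (a b c d : V) : Prop :=
  G.Adj a b ∧ G.Adj a c ∧ G.Adj a d ∧
    ¬ G.Adj b c ∧ ¬ G.Adj b d ∧ ¬ G.Adj c d ∧ b ≠ c ∧ b ≠ d ∧ c ≠ d

/-- Every claw has at least one heavy end vertex. -/
def OneHeavy {V : Type*} [Fintype V] (G : SimpleGraph V) : Prop :=
  ∀ a b c d, IsClaw G a b c d → Heavy G b ∨ Heavy G c ∨ Heavy G d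

/-- Every claw has at least two heavy end vertices. -/
def TwoHeavy {V : Type*} [Fintype V] (G : SimpleGraph V) : Prop :=
  ∀ a b c d, IsClaw G a b c d →
    (Heavy G b ∧ Heavy G c) ∨ (Heavy G b ∧ Heavy G d) ∨ (Heavy G c ∧ Heavy G d)

/-- Every claw has two end vertices with degree sum at least `n`. -/
def ClawHeavy {V : Type*} [Fintype V] (G : SimpleGraph V) : Prop :=
  ∀ a b c d, IsClaw G a b c d →
    Fintype.card V ≤ (G.neighborSet b).ncard + (G.neighborSet c).ncard ∨
    Fintype.card V ≤ (G.neighborSet b).ncard + (G.neighborSet d).ncard ∨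
    Fintype.card V ≤ (G.neighborSet c).ncard + (G.neighborSet d).ncard

/-- `G` contains no induced claw. -/
def ClawFree {V : Type*} (G : SimpleGraph V) : Prop :=
  ∀ a b c d, ¬ IsClaw G a b c d

/-- Almost distance-hereditary: in every connected induced subgraph the distance
between two vertices exceeds their distance in `G` by at most one. -/
def AlmostDH {V : Type*} (G : SimpleGraph V) : Prop :=
  ∀ s : Set V, (G.induce s).Connected →
    ∀ x y : s, (G.induce s).dist x y ≤ G.dist (x : V) (y : V) + 1

/-- Distance-hereditary: every connected induced subgraph preserves distances. -/
def DistHered {V : Type*} (G : SimpleGraph V) : Prop :=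
  ∀ s : Set V, (G.induce s).Connected →
    ∀ x y : s, (G.induce s).dist x y = G.dist (x : V) (y : V)

/-- A cycle in `G`, encoded as an injective cyclic sequence of `m ≥ 3` pairwise
adjacent-in-order vertices. -/
def IsCycleMap {V : Type*} (G : SimpleGraph V) (m : ℕ) (f : ZMod m → V) : Prop :=
  3 ≤ m ∧ Function.Injective f ∧ ∀ i, G.Adj (f i) (f (i + 1))

/-- A longest cycle of `G`. -/
def IsLongestCycleMap {V : Type*} (G : SimpleGraph V) (m : ℕ) (f : ZMod m → V) : Prop :=
  IsCycleMap G m f ∧ ∀ (m' : ℕ) (f' : ZMod m' → V), IsCycleMap G m' f' → m' ≤ m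

/-- `R` is a connected component of the subgraph of `G` induced on `W`. -/
def IsCompOf {V : Type*} (G : SimpleGraph V) (W R : Set V) : Prop :=
  R.Nonempty ∧ R ⊆ W ∧ (G.induce R).Connected ∧
    ∀ x ∈ R, ∀ y ∈ W, G.Adj x y → y ∈ R

/-! ### Auxiliary machinery for the heavy cycle theorem -/

private lemma list_cycle_map {V : Type*} (G : SimpleGraph V) (L : List V)
    (h3 : 3 ≤ L.length) (hnd : L.Nodup) (hchain : List.Chain' G.Adj L)
    (hne : L ≠ [])
    (hclose : G.Adj (L.getLast hne) (L.head hne)) :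
    ∃ m f, IsCycleMap G m f ∧ Set.range f = {x | x ∈ L} := by
  haveI : NeZero L.length := ⟨by omega⟩
  haveI : Fact (1 < L.length) := ⟨by omega⟩
  refine ⟨L.length, fun i => L.get ⟨i.val, ZMod.val_lt i⟩, ⟨h3, ?_, ?_⟩, ?_⟩
  · intro i j hij
    have h2 := List.nodup_iff_injective_get.mp hnd hij
    have hv : i.val = j.val := congrArg Fin.val h2
    have := congrArg (fun t : ℕ => (t : ZMod L.length)) hv
    simpa [ZMod.natCast_rightInverse i, ZMod.natCast_rightInverse j] using this
  · intro i
    have hval : (i + 1).val = (i.val + 1) % L.length := by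
      rw [ZMod.val_add, ZMod.val_one]
    by_cases hc : i.val + 1 < L.length
    · have : (i + 1).val = i.val + 1 := by rw [hval, Nat.mod_eq_of_lt hc]
      have hch := List.isChain_iff_getElem.mp hchain i.val (by omega)
      simp only []
      convert hch using 2
      all_goals simp only [List.get_eq_getElem, this]
    · have hlast : i.val = L.length - 1 := by have := ZMod.val_lt i; omega
      have h0 : (i + 1).val = 0 := by
        rw [hval, hlast, Nat.sub_add_cancel (by omega : 1 ≤ L.length)]; simp
      show G.Adj (L.get ⟨i.val, ZMod.val_lt i⟩) (L.get ⟨(i+1).val, ZMod.val_lt _⟩)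
      have e1 : L.get ⟨i.val, ZMod.val_lt i⟩ = L.getLast hne := by
        rw [List.getLast_eq_getElem]; simp only [List.get_eq_getElem]; congr 1
      have e2 : L.get ⟨(i+1).val, ZMod.val_lt _⟩ = L.head hne := by
        simp only [List.get_eq_getElem, List.head_eq_getElem_zero hne]; congr 1
      rw [e1, e2]; exact hclose
  · ext x
    simp only [Set.mem_range, Set.mem_setOf_eq]
    constructor
    · rintro ⟨i, rfl⟩; exact List.get_mem _ _
    · intro hx
      obtain ⟨n, hn⟩ := List.mem_iff_get.mp hx
      refine ⟨(n : ZMod L.length), ?_⟩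
      rw [← hn]; congr 1; exact Fin.ext (by simp [ZMod.val_natCast_of_lt n.isLt])

section Segs
variable {V : Type*} {G : SimpleGraph V} {m : ℕ} {f : ZMod m → V}

/-- ascending segment of a cycle map: `[f (b+lo), f (b+lo+1), ..., f (b+lo+len-1)]`. -/
private def asc (f : ZMod m → V) (b : ZMod m) (lo len : ℕ) : List V :=
  (List.range len).map fun t => f (b + ((lo + t : ℕ) : ZMod m))

private lemma asc_length (b : ZMod m) (lo len : ℕ) : (asc f b lo len).length = len := by
  simp [asc]

private lemma mem_asc {x : V} {b : ZMod m} {lo len : ℕ} :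
    x ∈ asc f b lo len ↔ ∃ t, lo ≤ t ∧ t < lo + len ∧ x = f (b + (t : ZMod m)) := by
  simp only [asc, List.mem_map, List.mem_range]
  constructor
  · rintro ⟨t, ht, rfl⟩; exact ⟨lo + t, by omega, by omega, rfl⟩
  · rintro ⟨t, h1, h2, rfl⟩
    have h3 : t - lo < len := by omega
    refine ⟨t - lo, h3, ?_⟩
    have h4 : lo + (t - lo) = t := by omega
    rw [h4]

private lemma asc_ne_nil {b : ZMod m} {lo len : ℕ} (h : 0 < len) : asc f b lo len ≠ [] := by
  intro hcon
  have := asc_length (f := f) b lo len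
  rw [hcon] at this; simp at this; omega

private lemma head_asc {b : ZMod m} {lo len : ℕ} (h : 0 < len) (hne : asc f b lo len ≠ []) :
    (asc f b lo len).head hne = f (b + (lo : ZMod m)) := by
  obtain ⟨len, rfl⟩ : ∃ l, len = l + 1 := ⟨len - 1, by omega⟩
  simp [asc, List.range_succ_eq_map]

private lemma getLast_asc {b : ZMod m} {lo len : ℕ} (h : 0 < len) (hne : asc f b lo len ≠ []) :
    (asc f b lo len).getLast hne = f (b + ((lo + len - 1 : ℕ) : ZMod m)) := by
  obtain ⟨len, rfl⟩ : ∃ l, len = l + 1 := ⟨len - 1, by omega⟩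
  simp only [asc, List.range_succ, List.map_append, List.map_cons, List.map_nil]
  have h4 : lo + (len + 1) - 1 = lo + len := by omega
  rw [h4, List.getLast_append]
  simp

private lemma chain'_asc (hadj : ∀ i, G.Adj (f i) (f (i + 1))) (b : ZMod m) (lo len : ℕ) :
    List.Chain' G.Adj (asc f b lo len) := by
  rw [List.Chain', List.isChain_iff_getElem]
  intro i hi
  simp only [asc, List.length_map, List.length_range] at hi
  simp only [asc, List.get_eq_getElem, List.getElem_map, List.getElem_range]
  have hcast : ((lo + (i+1) : ℕ) : ZMod m) = ((lo + i : ℕ) : ZMod m) + 1 := by push_cast; ring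
  rw [hcast, ← add_assoc]
  exact hadj _

private lemma mem_asc_off {b : ZMod m} {lo len t : ℕ} (h1 : lo ≤ t) (h2 : t < lo + len) :
    f (b + (t : ZMod m)) ∈ asc f b lo len :=
  mem_asc.2 ⟨t, h1, h2, rfl⟩

/-- equal images force equal offsets mod `m`. -/
private lemma off_mod (hinj : Function.Injective f) {b : ZMod m} {s t : ℕ}
    (h : f (b + (s : ZMod m)) = f (b + (t : ZMod m))) : s % m = t % m := by
  have h2 : (s : ZMod m) = (t : ZMod m) := add_left_cancel (hinj h)
  exact (ZMod.natCast_eq_natCast_iff _ _ _).mp h2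

private lemma nat_window {s t : ℕ} (hmod : s % m = t % m) (hst : s ≤ t) (hw : t < s + m) :
    s = t := by
  have h2 : m ∣ t - s := (Nat.modEq_iff_dvd' hst).mp hmod
  have h3 : t - s < m := by omega
  rcases Nat.eq_zero_or_pos (t - s) with h | h
  · omega
  · exact absurd (Nat.le_of_dvd h h2) (by omega)

/-- equal images with both offsets in a window of size `≤ m` force equality. -/
private lemma off_inj (hinj : Function.Injective f) {b : ZMod m} {s t : ℕ}
    (h : f (b + (s : ZMod m)) = f (b + (t : ZMod m))) (hw1 : t < s + m) (hw2 : s < t + m) :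
    s = t := by
  rcases le_total s t with hst | hst
  · exact nat_window (off_mod hinj h) hst hw1
  · exact (nat_window (off_mod hinj h.symm) hst hw2).symm

private lemma nodup_asc (hinj : Function.Injective f) {b : ZMod m} {lo len : ℕ}
    (hwin : len ≤ m) : (asc f b lo len).Nodup := by
  rw [asc, List.nodup_map_iff_inj_on List.nodup_range]
  intro s hs t ht h
  simp only [List.mem_range] at hs ht
  have := off_inj hinj h (by omega) (by omega)
  omega

/-- every index of the cycle is some offset `< m` from the base. -/
private lemma exists_off (hm : 3 ≤ m) (b i : ZMod m) : ∃ t : ℕ, t < m ∧ i = b + (t : ZMod m) := by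
  haveI : NeZero m := ⟨by omega⟩
  refine ⟨(i - b).val, ZMod.val_lt _, ?_⟩
  have : ((i - b).val : ZMod m) = i - b := ZMod.natCast_rightInverse (i - b)
  rw [this]
  ring

private lemma off_full (hm : 3 ≤ m) (b : ZMod m) : f (b + ((m : ℕ) : ZMod m)) = f b := by
  haveI : NeZero m := ⟨by omega⟩
  rw [ZMod.natCast_self, add_zero]

private lemma sub_val_eq (hm : 3 ≤ m) {i j : ZMod m} {t : ℕ} (ht : t < m)
    (h : j = i + (t : ZMod m)) : (j - i).val = t := by
  haveI : NeZero m := ⟨by omega⟩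
  rw [h]
  have h2 : i + (t : ZMod m) - i = (t : ZMod m) := by ring
  rw [h2, ZMod.val_natCast_of_lt ht]

private lemma base_off (hm : 3 ≤ m) (b i : ZMod m) :
    i = b + (((i - b).val : ℕ) : ZMod m) := by
  haveI : NeZero m := ⟨by omega⟩
  have h2 : ((i - b).val : ZMod m) = i - b := ZMod.natCast_rightInverse (i - b)
  rw [h2]
  ring

/-- surgery list shape 1 : `v :: [f b, ..., f (b+e)]`. -/
private lemma vtx_seg_surgery (hm3 : 3 ≤ m) (hinj : Function.Injective f)
    (hadj : ∀ i, G.Adj (f i) (f (i + 1))) (v : V) (hv : ∀ i, v ≠ f i) (b : ZMod m) (e : ℕ)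
    (hem : e < m) (he1 : 1 ≤ e)
    (h1 : G.Adj v (f b)) (h2 : G.Adj (f (b + (e : ZMod m))) v) :
    ∃ (L : List V) (hne : L ≠ []), 3 ≤ L.length ∧ L.Nodup ∧ List.Chain' G.Adj L ∧
      G.Adj (L.getLast hne) (L.head hne) ∧ v ∈ L ∧
      ∀ t : ℕ, t ≤ e → f (b + (t : ZMod m)) ∈ L := by
  have hascne : asc f b 0 (e + 1) ≠ [] := asc_ne_nil (by omega)
  refine ⟨v :: asc f b 0 (e + 1), by simp, ?_, ?_, ?_, ?_, by simp, ?_⟩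
  · simp [asc_length]; omega
  · rw [List.nodup_cons]
    refine ⟨?_, nodup_asc hinj (by omega)⟩
    intro hmem
    obtain ⟨t, _, _, hveq⟩ := mem_asc.mp hmem
    exact hv _ hveq
  · rw [List.Chain', List.isChain_cons]
    refine ⟨?_, chain'_asc hadj _ _ _⟩
    intro y hy
    rw [List.head?_eq_head hascne, Option.mem_def, Option.some.injEq] at hy
    subst hy
    rw [head_asc (by omega)]
    simpa using h1
  · rw [List.getLast_cons hascne, List.head_cons, getLast_asc (by omega)]
    have he : (0 + (e + 1) - 1 : ℕ) = e := by omega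
    rw [he]
    exact h2
  · intro t ht
    exact List.mem_cons_of_mem _ (mem_asc_off (by omega) (by omega))

/-- surgery list shape 2 : `[f b, ..., f (b+e)] ++ walk support`. -/
private lemma seg_path_surgery (hm3 : 3 ≤ m) (hinj : Function.Injective f)
    (hadj : ∀ i, G.Adj (f i) (f (i + 1))) {w1 w2 : V} (q : G.Walk w1 w2) (hq : q.IsPath)
    (hsupC : ∀ y ∈ q.support, ∀ i, y ≠ f i) (b : ZMod m) (e : ℕ)
    (hem : e < m) (he1 : 1 ≤ e)
    (h1 : G.Adj (f (b + (e : ZMod m))) w1) (h2 : G.Adj w2 (f b)) :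
    ∃ (L : List V) (hne : L ≠ []), 3 ≤ L.length ∧ L.Nodup ∧ List.Chain' G.Adj L ∧
      G.Adj (L.getLast hne) (L.head hne) ∧ (∀ y ∈ q.support, y ∈ L) ∧
      ∀ t : ℕ, t ≤ e → f (b + (t : ZMod m)) ∈ L := by
  have hascne : asc f b 0 (e + 1) ≠ [] := asc_ne_nil (by omega)
  have hsupne : q.support ≠ [] := q.support_ne_nil
  have hLne : asc f b 0 (e + 1) ++ q.support ≠ [] := by
    intro hcon
    exact hascne (List.append_eq_nil_iff.mp hcon).1
  refine ⟨asc f b 0 (e + 1) ++ q.support, hLne, ?_, ?_, ?_, ?_, ?_, ?_⟩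
  · have := q.length_support
    simp only [List.length_append, asc_length]
    omega
  · rw [List.nodup_append]
    refine ⟨nodup_asc hinj (by omega), hq.support_nodup, ?_⟩
    intro x hx _ hx2 rfl
    obtain ⟨t, _, _, rfl⟩ := mem_asc.mp hx
    exact hsupC _ hx2 _ rfl
  · rw [List.Chain', List.isChain_append]
    refine ⟨chain'_asc hadj _ _ _, q.isChain_adj_support, ?_⟩
    intro x hx y hy
    rw [List.getLast?_eq_getLast hascne] at hx
    simp only [Option.mem_def, Option.some.injEq] at hx
    rw [List.head?_eq_head hsupne, Option.mem_def, Option.some.injEq] at hy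
    subst hx; subst hy
    rw [getLast_asc (by omega)]
    have he : (0 + (e + 1) - 1 : ℕ) = e := by omega
    have hw : q.support.head hsupne = w1 := q.head_support
    rw [he, hw]
    exact h1
  · have hl1 : (asc f b 0 (e + 1) ++ q.support).getLast hLne = w2 := by
      rw [List.getLast_append_of_ne_nil _ hsupne, q.getLast_support]
    have hl2 : (asc f b 0 (e + 1) ++ q.support).head hLne = f b := by
      rw [List.head_append_of_ne_nil hascne, head_asc (by omega)]
      simp
    rw [hl1, hl2]
    exact h2
  · intro y hy
    exact List.mem_append_right _ hy
  · intro t ht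
    exact List.mem_append_left _ (mem_asc_off (by omega) (by omega))

/-- surgery list shape 3 : `v :: [f (b+e), ..., f (b+c+1)] ++ [f b, ..., f (b+c)]`. -/
private lemma two_seg_surgery (hm3 : 3 ≤ m) (hinj : Function.Injective f)
    (hadj : ∀ i, G.Adj (f i) (f (i + 1))) (v : V) (hv : ∀ i, v ≠ f i) (b : ZMod m) (c e : ℕ)
    (hce : c < e) (hem : e < m)
    (h1 : G.Adj v (f (b + (e : ZMod m))))
    (h2 : G.Adj (f (b + ((c + 1 : ℕ) : ZMod m))) (f b))
    (h3 : G.Adj (f (b + (c : ZMod m))) v) :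
    ∃ (L : List V) (hne : L ≠ []), 3 ≤ L.length ∧ L.Nodup ∧ List.Chain' G.Adj L ∧
      G.Adj (L.getLast hne) (L.head hne) ∧ v ∈ L ∧
      ∀ t : ℕ, t ≤ e → f (b + (t : ZMod m)) ∈ L := by
  have hdescne0 : asc f b (c + 1) (e - c) ≠ [] := asc_ne_nil (by omega)
  have hdescne : (asc f b (c + 1) (e - c)).reverse ≠ [] := by
    simpa using hdescne0
  have hascne : asc f b 0 (c + 1) ≠ [] := asc_ne_nil (by omega)
  have happne : (asc f b (c + 1) (e - c)).reverse ++ asc f b 0 (c + 1) ≠ [] := by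
    intro hcon
    exact hdescne (List.append_eq_nil_iff.mp hcon).1
  refine ⟨v :: ((asc f b (c + 1) (e - c)).reverse ++ asc f b 0 (c + 1)), by simp,
    ?_, ?_, ?_, ?_, by simp, ?_⟩
  · simp [asc_length]; omega
  · rw [List.nodup_cons, List.nodup_append, List.nodup_reverse]
    refine ⟨?_, nodup_asc hinj (by omega), nodup_asc hinj (by omega), ?_⟩
    · intro hmem
      rcases List.mem_append.mp hmem with hmem | hmem
      · rw [List.mem_reverse] at hmem
        obtain ⟨t, _, _, hveq⟩ := mem_asc.mp hmem
        exact hv _ hveq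
      · obtain ⟨t, _, _, hveq⟩ := mem_asc.mp hmem
        exact hv _ hveq
    · intro x hx _ hx2 rfl
      rw [List.mem_reverse] at hx
      obtain ⟨t, ht1, ht2, rfl⟩ := mem_asc.mp hx
      obtain ⟨s, hs1, hs2, heq⟩ := mem_asc.mp hx2
      have := off_inj hinj heq.symm (by omega) (by omega)
      omega
  · rw [List.Chain', List.isChain_cons]
    refine ⟨?_, ?_⟩
    · intro y hy
      rw [List.head?_eq_head happne, Option.mem_def, Option.some.injEq] at hy
      subst hy
      rw [List.head_append_of_ne_nil hdescne, List.head_reverse]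
      rw [getLast_asc (by omega)]
      have he : (c + 1 + (e - c) - 1 : ℕ) = e := by omega
      rw [he]
      exact h1
    · rw [List.isChain_append]
      refine ⟨?_, chain'_asc hadj _ _ _, ?_⟩
      · rw [List.isChain_reverse]
        exact (chain'_asc hadj _ _ _).imp (fun a b h => h.symm)
      · intro x hx y hy
        rw [List.getLast?_eq_getLast hdescne] at hx
        simp only [Option.mem_def, Option.some.injEq] at hx
        rw [List.head?_eq_head hascne, Option.mem_def, Option.some.injEq] at hy
        subst hx; subst hy
        rw [List.getLast_reverse, head_asc (by omega), head_asc (by omega)]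
        simpa using h2
  · rw [List.getLast_cons happne, List.head_cons,
      List.getLast_append_of_ne_nil _ hascne, getLast_asc (by omega)]
    have he : (0 + (c + 1) - 1 : ℕ) = c := by omega
    rw [he]
    exact h3
  · intro t ht
    rcases Nat.lt_or_ge t (c + 1) with h | h
    · exact List.mem_cons_of_mem _ (List.mem_append_right _ (mem_asc_off (by omega) (by omega)))
    · refine List.mem_cons_of_mem _ (List.mem_append_left _ ?_)
      rw [List.mem_reverse]
      exact mem_asc_off (by omega) (by omega)


end Segs

section Basics
variable {V : Type*} [Fintype V] [DecidableEq V] {G : SimpleGraph V}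

private lemma conn_walk (h2conn : ∀ v : V, (G.induce {v}ᶜ).Connected) {x a b : V}
    (ha : a ≠ x) (hb : b ≠ x) :
    ∃ p : G.Walk a b, p.IsPath ∧ ∀ y ∈ p.support, y ≠ x := by
  have hr : (G.induce ({x}ᶜ : Set V)).Reachable ⟨a, ha⟩ ⟨b, hb⟩ :=
    (h2conn x).preconnected _ _
  obtain ⟨q⟩ := hr
  let emb := SimpleGraph.Embedding.induce (G := G) ({x}ᶜ : Set V)
  let p0 : G.Walk a b := q.map emb.toHom
  have hsup : ∀ y ∈ p0.support, y ≠ x := by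
    intro y hy
    have hy := (Walk.support_map emb.toHom q).subst (motive := fun l => y ∈ l) hy
    obtain ⟨z, hz, rfl⟩ := List.mem_map.mp hy
    exact z.2
  exact ⟨p0.toPath, p0.toPath.2, fun y hy => hsup y (Walk.support_toPath_subset p0 hy)⟩

private lemma exists_notmem_pair (h3 : 3 ≤ Fintype.card V) (u x : V) :
    ∃ b : V, b ≠ u ∧ b ≠ x := by
  by_contra hcon
  push_neg at hcon
  have hsub : (Finset.univ : Finset V) ⊆ ({u, x} : Finset V) := by
    intro b _
    rcases eq_or_ne b u with rfl | hbu
    · exact Finset.mem_insert_self _ _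
    · simp [hcon b hbu]
  have h1 := Finset.card_le_card hsub
  simp only [Finset.card_univ] at h1
  have h2 : ({u, x} : Finset V).card ≤ 2 :=
    le_trans (Finset.card_insert_le _ _) (by simp)
  omega

private lemma first_nbr {x b : V} (hxb : x ≠ b) (p : G.Walk x b) :
    ∃ w, G.Adj x w ∧ w ∈ p.support.tail := by
  cases p with
  | nil => exact absurd rfl hxb
  | cons h q => exact ⟨_, h, by simp⟩

private lemma two_nbrs (h3 : 3 ≤ Fintype.card V)
    (h2conn : ∀ v : V, (G.induce {v}ᶜ).Connected) (x : V) :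
    ∃ w1 w2, w1 ≠ w2 ∧ G.Adj x w1 ∧ G.Adj x w2 := by
  obtain ⟨u, hu⟩ := Fintype.exists_ne_of_one_lt_card (by omega) x
  obtain ⟨b, hbu, hbx⟩ := exists_notmem_pair h3 u x
  obtain ⟨p, _, hps⟩ := conn_walk h2conn (x := u) (Ne.symm hu) hbu
  obtain ⟨w1, hw1, _⟩ := first_nbr hbx.symm p
  obtain ⟨b', hb'w, hb'x⟩ := exists_notmem_pair h3 w1 x
  obtain ⟨p', _, hps'⟩ := conn_walk h2conn (x := w1) (fun h => G.irrefl (h ▸ hw1)) hb'w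
  obtain ⟨w2, hw2, hw2mem⟩ := first_nbr hb'x.symm p'
  refine ⟨w2, w1, ?_, hw2, hw1⟩
  intro h
  exact hps' w2 (List.mem_of_mem_tail hw2mem) h

private lemma cycle_through (h3 : 3 ≤ Fintype.card V)
    (h2conn : ∀ v : V, (G.induce {v}ᶜ).Connected) (x : V) :
    ∃ (L : List V) (hne : L ≠ []), 3 ≤ L.length ∧ L.Nodup ∧ List.Chain' G.Adj L ∧
      G.Adj (L.getLast hne) (L.head hne) ∧ x ∈ L := by
  obtain ⟨w1, w2, hne, h1, h2⟩ := two_nbrs h3 h2conn x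
  obtain ⟨p, hp, hps⟩ := conn_walk h2conn (x := x) h1.ne' h2.ne'
  have hsupne : p.support ≠ [] := p.support_ne_nil
  refine ⟨x :: p.support, by simp, ?_, ?_, ?_, ?_, by simp⟩
  · have := p.length_support
    have hplen : p.length ≠ 0 := fun h => hne (Walk.eq_of_length_eq_zero h)
    simp only [List.length_cons, this]
    omega
  · exact List.nodup_cons.2 ⟨fun h => hps x h rfl, hp.support_nodup⟩
  · rw [p.support_eq_cons]
    exact List.isChain_cons_cons.2 ⟨h1, by rw [← p.support_eq_cons]; exact p.isChain_adj_support⟩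
  · rw [List.getLast_cons hsupne, List.head_cons, p.getLast_support]
    exact h2.symm

end Basics


private lemma cross_walk {V : Type*} {G : SimpleGraph V} {Cs R : Set V}
    (hclose : ∀ x ∈ R, ∀ y, G.Adj x y → y ∉ Cs → y ∈ R)
    (hdisj : ∀ x ∈ R, x ∉ Cs) (a : V) :
    ∀ {x c : V} (p : G.Walk x c), x ∈ R → c ∈ Cs → (∀ y ∈ p.support, y ≠ a) →
      ∃ w u, w ∈ R ∧ u ∈ Cs ∧ u ≠ a ∧ G.Adj w u := by
  intro x c p
  induction p with
  | nil =>
    intro hx hc _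
    exact absurd hc (hdisj _ hx)
  | @cons x' y' c' h q ih =>
    intro hx hc hsup
    by_cases hyC : y' ∈ Cs
    · exact ⟨x', y', hx, hyC, hsup y' (by simp), h⟩
    · exact ih (hclose x' hx y' h hyC) hc
        (fun z hz => hsup z (by simp only [Walk.support_cons]; exact List.mem_cons_of_mem _ hz))

/-- Every 2-connected graph (at least 3 vertices, connected after deleting any
single vertex) contains a heavy cycle: a cycle through every heavy vertex. -/
theorem heavy_cycle_exists {V : Type*} [Fintype V] (G : SimpleGraph V)
    (h3 : 3 ≤ Fintype.card V)
    (h2conn : ∀ v : V, (G.induce {v}ᶜ).Connected) :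
    ∃ (m : ℕ) (f : ZMod m → V), IsCycleMap G m f ∧
      ∀ v : V, Heavy G v → v ∈ Set.range f := by
  classical
  set n := Fintype.card V with hn
  set H : Set V := {y | Heavy G y} with hH
  -- existence of some cycle
  have hex : ∃ m f, IsCycleMap G m f := by
    obtain ⟨x⟩ : Nonempty V := Fintype.card_pos_iff.mp (by omega)
    obtain ⟨L, hne, h3', hnd, hch, hcl, _⟩ := cycle_through h3 h2conn x
    obtain ⟨m, f, hC, _⟩ := list_cycle_map G L h3' hnd hch hne hcl
    exact ⟨m, f, hC⟩
  -- choose a cycle with the maximum number of heavy vertices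
  set P : ℕ → Prop := fun q => ∃ m f, IsCycleMap G m f ∧ q ≤ ((Set.range f) ∩ H).ncard
    with hP
  have hP0 : P 0 := by
    obtain ⟨m, f, hC⟩ := hex; exact ⟨m, f, hC, Nat.zero_le _⟩
  have hspec : P (Nat.findGreatest P n) := Nat.findGreatest_spec (Nat.zero_le n) hP0
  obtain ⟨m, f, hC, hscore⟩ := hspec
  have hmax : ∀ (m' : ℕ) (f' : ZMod m' → V), IsCycleMap G m' f' →
      ((Set.range f') ∩ H).ncard ≤ ((Set.range f) ∩ H).ncard := by
    intro m' f' hC'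
    refine le_trans (Nat.le_findGreatest ?_ ⟨m', f', hC', le_refl _⟩) hscore
    calc ((Set.range f') ∩ H).ncard ≤ (Set.univ : Set V).ncard :=
          Set.ncard_le_ncard (Set.subset_univ _) Set.finite_univ
      _ = n := by rw [Set.ncard_univ]; exact Nat.card_eq_fintype_card
  by_cases hall : ∀ w, Heavy G w → w ∈ Set.range f
  · exact ⟨m, f, hC, hall⟩
  exfalso
  push_neg at hall
  obtain ⟨v, hvH, hvC⟩ := hall
  obtain ⟨hm3, hfinj, hfadj⟩ := hC
  haveI : NeZero m := ⟨by omega⟩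
  set Cs : Set V := Set.range f with hCs
  -- the "win" lemma: a cycle through `v` and all heavy vertices of `Cs` is a contradiction
  have win : ∀ (L : List V) (hne : L ≠ []), 3 ≤ L.length → L.Nodup → List.Chain' G.Adj L →
      G.Adj (L.getLast hne) (L.head hne) → (∀ x, x ∈ Cs → x ∈ H → x ∈ L) → v ∈ L → False := by
    intro L hne h3' hnd hch hcl hcov hvL
    obtain ⟨m', f', hC', hrange⟩ := list_cycle_map G L h3' hnd hch hne hcl
    have hsub : insert v (Cs ∩ H) ⊆ (Set.range f') ∩ H := by
      rw [hrange]
      rintro x (rfl | hx)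
      · exact ⟨hvL, hvH⟩
      · exact ⟨hcov x hx.1 hx.2, hx.2⟩
    have h1 : (insert v (Cs ∩ H)).ncard = (Cs ∩ H).ncard + 1 :=
      Set.ncard_insert_of_notMem (fun hx => hvC hx.1) (Set.toFinite _)
    have h2 := Set.ncard_le_ncard hsub (Set.toFinite _)
    have h4 := hmax m' f' hC'
    omega
  -- the component of `v` off the cycle
  set R : Set V := {x | ∃ p : G.Walk v x, ∀ y ∈ p.support, y ∉ Cs} with hRdef
  have hvR : v ∈ R := ⟨Walk.nil, by
    intro y hy
    simp only [Walk.support_nil, List.mem_singleton] at hy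
    subst hy; exact hvC⟩
  have hRC : ∀ x ∈ R, x ∉ Cs := by rintro x ⟨p, hp⟩; exact hp x p.end_mem_support
  have hRclose : ∀ x ∈ R, ∀ y, G.Adj x y → y ∉ Cs → y ∈ R := by
    rintro x ⟨p, hp⟩ y hxy hyC
    refine ⟨p.concat hxy, ?_⟩
    intro z hz
    rw [Walk.support_concat] at hz
    rcases List.mem_append.mp hz with hz | hz
    · exact hp z hz
    · simp only [List.mem_singleton] at hz; subst hz; exact hyC
  have hRpath : ∀ w ∈ R, ∃ q : G.Walk v w, q.IsPath ∧ ∀ y ∈ q.support, y ∈ R := by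
    rintro w ⟨p, hp⟩
    refine ⟨p.toPath, p.toPath.2, ?_⟩
    intro y hy
    have hyP : y ∈ p.support := Walk.support_toPath_subset p hy
    exact ⟨p.takeUntil y hyP, fun z hz => hp z (Walk.support_takeUntil_subset _ _ hz)⟩
  have hnbrR : ∀ u, G.Adj v u → u ∉ Cs → u ∈ R := fun u h hu => hRclose v hvR u h hu
  -- the neighbours of `v` on the cycle
  set Ai : Finset (ZMod m) := Finset.univ.filter (fun i => G.Adj v (f i)) with hAidef
  set k := Ai.card with hkdef
  have hAimem : ∀ i, i ∈ Ai ↔ G.Adj v (f i) := by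
    intro i; simp [hAidef]
  -- counting helpers
  have nsub : ∀ (x : V) (E : Set V), (∀ y ∈ E, ¬ G.Adj x y) →
      (G.neighborSet x).ncard + E.ncard ≤ n := by
    intro x E hE
    have hdisj : Disjoint (G.neighborSet x) E := by
      rw [Set.disjoint_left]; intro y hy hyE; exact hE y hyE hy
    calc (G.neighborSet x).ncard + E.ncard = ((G.neighborSet x) ∪ E).ncard :=
          (Set.ncard_union_eq hdisj (Set.toFinite _) (Set.toFinite _)).symm
      _ ≤ (Set.univ : Set V).ncard := Set.ncard_le_ncard (Set.subset_univ _) Set.finite_univ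
      _ = n := by rw [Set.ncard_univ]; exact Nat.card_eq_fintype_card
  have hdv : (G.neighborSet v).ncard + 1 ≤ k + R.ncard := by
    have hsub : insert v (G.neighborSet v) ⊆ (f '' (Ai : Set (ZMod m))) ∪ R := by
      rintro x (rfl | hx)
      · exact Or.inr hvR
      · by_cases hxC : x ∈ Cs
        · obtain ⟨i, rfl⟩ := hxC
          exact Or.inl ⟨i, (hAimem i).mpr hx, rfl⟩
        · exact Or.inr (hnbrR x hx hxC)
    have h1 : (insert v (G.neighborSet v)).ncard = (G.neighborSet v).ncard + 1 :=
      Set.ncard_insert_of_notMem (fun h => G.irrefl h) (Set.toFinite _)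
    have h2 := Set.ncard_le_ncard hsub (Set.toFinite _)
    have h3 := Set.ncard_union_le (f '' (Ai : Set (ZMod m))) R
    have h4 : (f '' (Ai : Set (ZMod m))).ncard = k := by
      rw [Set.ncard_image_of_injective _ hfinj, Set.ncard_coe_finset]
    omega
  -- two common neighbours for any two nonadjacent heavy vertices
  have hcn2 : ∀ y, Heavy G y → ¬ G.Adj v y → v ≠ y →
      2 ≤ ((G.neighborSet v) ∩ (G.neighborSet y)).ncard := by
    intro y hy hnadj hne
    have hsub : (G.neighborSet v) ∪ (G.neighborSet y) ⊆ Set.univ \ {v, y} := by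
      rintro x (hx | hx)
      · refine ⟨trivial, ?_⟩
        rintro (rfl | rfl)
        · exact G.irrefl hx
        · exact hnadj hx
      · refine ⟨trivial, ?_⟩
        rintro (rfl | rfl)
        · exact hnadj (hx.symm)
        · exact G.irrefl hx
    have hd2 : ({v, y} : Set V).ncard = 2 := Set.ncard_pair hne
    have hdiff : (Set.univ \ ({v, y} : Set V)).ncard = n - 2 := by
      rw [Set.ncard_diff (Set.subset_univ ({v, y} : Set V)) (Set.toFinite _), hd2, Set.ncard_univ]
      congr 1
      exact Nat.card_eq_fintype_card
    have hU : ((G.neighborSet v) ∪ (G.neighborSet y)).ncard ≤ n - 2 :=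
      hdiff ▸ Set.ncard_le_ncard hsub (Set.toFinite _)
    have hie := Set.ncard_inter_add_ncard_union (G.neighborSet v) (G.neighborSet y)
      (Set.toFinite _) (Set.toFinite _)
    have hv2 : n ≤ 2 * (G.neighborSet v).ncard := hvH
    have hy2 : n ≤ 2 * (G.neighborSet y).ncard := hy
    omega
  -- there is a heavy vertex on the cycle
  have hHCs : ∃ i0 : ZMod m, f i0 ∈ H := by
    by_contra hcon
    push_neg at hcon
    obtain ⟨L, hne, hl3, hnd, hch, hcl, hvL⟩ := cycle_through h3 h2conn v
    refine win L hne hl3 hnd hch hcl ?_ hvL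
    rintro x ⟨i, rfl⟩ hxH
    exact absurd hxH (hcon i)
  obtain ⟨iy0, hy0H⟩ := hHCs
  have hvne : ∀ i : ZMod m, v ≠ f i := by
    rintro i rfl; exact hvC ⟨i, rfl⟩
  by_cases hk0 : Ai = ∅
  · -- Case k = 0 : v has no neighbour on the cycle.
    have hnadj : ∀ (i : ZMod m), ¬ G.Adj v (f i) := by
      intro i hadj
      have : i ∈ Ai := (hAimem i).mpr hadj
      rw [hk0] at this; simp at this
    have hcnR : ∀ (i : ZMod m), ∀ z ∈ (G.neighborSet v) ∩ (G.neighborSet (f i)), z ∈ R := by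
      rintro i z ⟨hz1, _⟩
      refine hnbrR z hz1 ?_
      rintro ⟨j, rfl⟩
      exact hnadj j hz1
    -- first heavy vertex forward from `iy0`
    have hQex : ∃ t : ℕ, f (iy0 + ((t + 1 : ℕ) : ZMod m)) ∈ H ∧ t + 1 ≤ m := by
      refine ⟨m - 1, ?_, by omega⟩
      have he : (m - 1 + 1 : ℕ) = m := by omega
      rw [he, off_full (f := f) hm3]
      exact hy0H
    set t' : ℕ := Nat.find hQex + 1 with ht'def
    have hfind := Nat.find_spec hQex
    have ht'H : f (iy0 + (t' : ZMod m)) ∈ H := hfind.1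
    have ht'le : t' ≤ m := hfind.2
    have ht'min : ∀ s : ℕ, 1 ≤ s → s < t' → f (iy0 + (s : ZMod m)) ∉ H := by
      intro s h1 h2 hsH
      have hmin := Nat.find_min hQex (m := s - 1) (by omega)
      have he : s - 1 + 1 = s := by omega
      rw [he] at hmin
      exact hmin ⟨hsH, by omega⟩
    -- common neighbours
    have hcn0 : 2 ≤ ((G.neighborSet v) ∩ (G.neighborSet (f iy0))).ncard :=
      hcn2 (f iy0) hy0H (hnadj iy0) (hvne iy0)
    have hcn' : 2 ≤ ((G.neighborSet v) ∩ (G.neighborSet (f (iy0 + (t' : ZMod m))))).ncard :=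
      hcn2 _ ht'H (hnadj _) (hvne _)
    obtain ⟨z1, hz1⟩ := Set.nonempty_of_ncard_ne_zero (s := (G.neighborSet v) ∩ (G.neighborSet (f iy0))) (by omega)
    obtain ⟨z', hz', hz'ne⟩ := Set.exists_ne_of_one_lt_ncard (by omega : 1 < ((G.neighborSet v) ∩ (G.neighborSet (f (iy0 + (t' : ZMod m))))).ncard) z1
    have hz1R : z1 ∈ R := hcnR iy0 z1 hz1
    have hz'R : z' ∈ R := hcnR _ z' hz'
    have hz1v : G.Adj v z1 := hz1.1
    have hz1y : G.Adj (f iy0) z1 := hz1.2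
    have hz'v : G.Adj v z' := hz'.1
    have hz'y : G.Adj (f (iy0 + (t' : ZMod m))) z' := hz'.2
    -- the surgery
    by_cases htm : t' = m
    · -- only heavy on cycle is y0 ; 4-cycle y0 z1 v z'
      have hz'y0 : G.Adj (f iy0) z' := by
        rw [htm, off_full (f := f) hm3] at hz'y; exact hz'y
      refine win [f iy0, z1, v, z'] (by simp) (by simp) ?_ ?_ ?_ ?_ (by simp)
      · have e1 : f iy0 ≠ z1 := fun h => hRC z1 hz1R ⟨iy0, h⟩
        have e2 : f iy0 ≠ v := (hvne iy0).symm
        have e3 : f iy0 ≠ z' := fun h => hRC z' hz'R ⟨iy0, h⟩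
        have e4 : z1 ≠ v := fun h => G.irrefl (h ▸ hz1v)
        have e5 : v ≠ z' := fun h => G.irrefl (h ▸ hz'v)
        have e6 : z1 ≠ z' := hz'ne.symm
        simp [e1, e2, e3, e4, e5, e6]
      · exact List.isChain_cons_cons.2 ⟨hz1y, List.isChain_cons_cons.2 ⟨hz1v.symm, List.isChain_cons_cons.2 ⟨hz'v, List.isChain_singleton _⟩⟩⟩
      · simpa using hz'y0.symm
      · rintro x ⟨i, rfl⟩ hxH
        obtain ⟨t, htm', rfl⟩ := exists_off hm3 iy0 i
        rcases Nat.eq_zero_or_pos t with rfl | ht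
        · simp
        · exact absurd hxH (ht'min t ht (by omega))
    · -- general surgery : [y', ..., y0] ++ [z1, v, z']
      have ht'm : t' < m := by omega
      have hascne : asc f iy0 t' (m - t' + 1) ≠ [] := asc_ne_nil (by omega)
      have hasclast : (asc f iy0 t' (m - t' + 1)).getLast hascne = f iy0 := by
        rw [getLast_asc (by omega)]
        have he : (t' + (m - t' + 1) - 1 : ℕ) = m := by omega
        rw [he, off_full (f := f) hm3]
      have haschead : (asc f iy0 t' (m - t' + 1)).head hascne = f (iy0 + (t' : ZMod m)) :=
        head_asc (by omega) _
      have hLne : asc f iy0 t' (m - t' + 1) ++ [z1, v, z'] ≠ [] := by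
        intro hcon
        exact hascne (List.append_eq_nil_iff.mp hcon).1
      refine win (asc f iy0 t' (m - t' + 1) ++ [z1, v, z']) hLne ?_ ?_ ?_ ?_ ?_ (by simp)
      · simp [asc_length]
      · rw [List.nodup_append]
        refine ⟨nodup_asc hfinj (by omega), ?_, ?_⟩
        · have e4 : z1 ≠ v := fun h => G.irrefl (h ▸ hz1v)
          have e5 : v ≠ z' := fun h => G.irrefl (h ▸ hz'v)
          have e6 : z1 ≠ z' := hz'ne.symm
          simp [e4, e5, e6]
        · intro x hx
          obtain ⟨t, _, _, rfl⟩ := mem_asc.mp hx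
          have e1 : f (iy0 + (t : ZMod m)) ≠ z1 := fun h => hRC z1 hz1R ⟨_, h⟩
          have e2 : f (iy0 + (t : ZMod m)) ≠ v := (hvne _).symm
          have e3 : f (iy0 + (t : ZMod m)) ≠ z' := fun h => hRC z' hz'R ⟨_, h⟩
          simp [e1, e2, e3]
      · rw [List.Chain', List.isChain_append]
        refine ⟨chain'_asc hfadj _ _ _, ?_, ?_⟩
        · exact List.isChain_cons_cons.2 ⟨hz1v.symm, List.isChain_cons_cons.2 ⟨hz'v, List.isChain_singleton _⟩⟩
        · intro x hx y hy
          rw [List.getLast?_eq_getLast hascne] at hx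
          simp only [Option.mem_def, Option.some.injEq] at hx
          simp only [List.head?_cons, Option.mem_def, Option.some.injEq] at hy
          subst hx; subst hy
          rw [hasclast]
          exact hz1y
      · have h1 : (asc f iy0 t' (m - t' + 1) ++ [z1, v, z']).getLast hLne = z' := by
          rw [List.getLast_append_of_ne_nil _ (by simp : ([z1, v, z'] : List V) ≠ [])]
          simp
        have h2 : (asc f iy0 t' (m - t' + 1) ++ [z1, v, z']).head hLne = f (iy0 + (t' : ZMod m)) := by
          rw [List.head_append_of_ne_nil hascne, haschead]
        rw [h1, h2]
        exact hz'y.symm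
      · rintro x ⟨i, rfl⟩ hxH
        obtain ⟨t, htm', rfl⟩ := exists_off hm3 iy0 i
        rcases Nat.eq_zero_or_pos t with rfl | ht
        · refine List.mem_append_left _ ?_
          have he : f (iy0 + ((0 : ℕ) : ZMod m)) = f (iy0 + ((m : ℕ) : ZMod m)) := by
            rw [off_full (f := f) hm3]; simp
          rw [he]
          exact mem_asc_off (by omega) (by omega)
        · by_cases hcor : t < t'
          · exact absurd hxH (ht'min t ht hcor)
          · exact List.mem_append_left _ (mem_asc_off (by omega) (by omega))
  · -- Case k ≥ 1 : v has a neighbour on the cycle.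
    obtain ⟨ia0, hia0A⟩ := Finset.nonempty_of_ne_empty hk0
    have hk1 : 1 ≤ k := Finset.card_pos.mpr ⟨ia0, hia0A⟩
    have hadjA : ∀ i ∈ Ai, G.Adj v (f i) := fun i hi => (hAimem i).mp hi
    have hm1 : ∀ b : ZMod m, b + ((m - 1 : ℕ) : ZMod m) = b - 1 := by
      intro b
      have h1 : ((m - 1 : ℕ) : ZMod m) = (m : ZMod m) - 1 := by
        rw [Nat.cast_sub (by omega : 1 ≤ m)]; simp
      rw [h1, ZMod.natCast_self]
      ring
    -- q1 : the successor of a neighbour of v on C is not a neighbour of v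
    have q1 : ∀ i ∈ Ai, i + 1 ∉ Ai := by
      intro i hi hcon
      have hclose : G.Adj (f ((i+1) + ((m-1 : ℕ) : ZMod m))) v := by
        rw [hm1]
        have he : i + 1 - 1 = i := by ring
        rw [he]
        exact (hadjA i hi).symm
      obtain ⟨L, hne, a1, a2, a3, a4, a5, a6⟩ :=
        vtx_seg_surgery hm3 hfinj hfadj v hvne (i+1) (m-1) (by omega) (by omega)
          (hadjA _ hcon) hclose
      refine win L hne a1 a2 a3 a4 ?_ a5
      rintro x ⟨j, rfl⟩ _
      obtain ⟨t, htm, rfl⟩ := exists_off hm3 (i+1) j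
      exact a6 t (by omega)
    -- q2 : successors of two neighbours of v on C are nonadjacent
    have q2 : ∀ i ∈ Ai, ∀ j ∈ Ai, i ≠ j → ¬ G.Adj (f (i + 1)) (f (j + 1)) := by
      intro i hi j hj hij hchord
      have hjd : j = i + ((((j - i : ZMod m)).val : ℕ) : ZMod m) := base_off hm3 i j
      set d := ((j - i : ZMod m)).val with hddef
      have hdm : d < m := ZMod.val_lt _
      have hd0 : d ≠ 0 := by
        intro h
        rw [h] at hjd
        simp at hjd
        exact hij hjd.symm
      have hd1 : d ≠ 1 := by
        intro h
        have hji : j = i + 1 := by rw [hjd, h]; norm_num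
        exact q1 i hi (hji ▸ hj)
      have hdm1 : d ≠ m - 1 := by
        intro h
        have hji : i = j + 1 := by rw [hjd, h, hm1]; ring
        exact q1 j hj (hji ▸ hi)
      have h1 : G.Adj v (f ((i+1) + ((m-1 : ℕ) : ZMod m))) := by
        rw [hm1]
        have he : i + 1 - 1 = i := by ring
        rw [he]
        exact hadjA i hi
      have h2 : G.Adj (f ((i+1) + ((d - 1 + 1 : ℕ) : ZMod m))) (f (i+1)) := by
        have he : (d - 1 + 1 : ℕ) = d := by omega
        have he2 : (i+1) + ((d : ℕ) : ZMod m) = j + 1 := by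
          rw [hjd]; push_cast; ring
        rw [he, he2]
        exact hchord.symm
      have h3 : G.Adj (f ((i+1) + ((d - 1 : ℕ) : ZMod m))) v := by
        have he : (i+1) + ((d - 1 : ℕ) : ZMod m) = j := by
          rw [Nat.cast_sub (by omega : 1 ≤ d), hjd]
          push_cast
          ring
        rw [he]
        exact (hadjA j hj).symm
      obtain ⟨L, hne, a1, a2, a3, a4, a5, a6⟩ :=
        two_seg_surgery hm3 hfinj hfadj v hvne (i+1) (d-1) (m-1) (by omega) (by omega) h1 h2 h3
      refine win L hne a1 a2 a3 a4 ?_ a5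
      rintro x ⟨l, rfl⟩ _
      obtain ⟨t, htm, rfl⟩ := exists_off hm3 (i+1) l
      exact a6 t (by omega)
    -- q3 : the successor of a neighbour of v on C has no neighbour in R
    have q3 : ∀ i ∈ Ai, ∀ w ∈ R, ¬ G.Adj (f (i + 1)) w := by
      intro i hi w hw hchord
      obtain ⟨q, hqp, hqR⟩ := hRpath w hw
      have hsupC : ∀ y ∈ q.support, ∀ l : ZMod m, y ≠ f l := by
        intro y hy l hyl
        exact hRC y (hqR y hy) ⟨l, hyl.symm⟩
      have h1 : G.Adj (f ((i+1) + ((m-1 : ℕ) : ZMod m))) v := by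
        rw [hm1]
        have he : i + 1 - 1 = i := by ring
        rw [he]
        exact (hadjA i hi).symm
      obtain ⟨L, hne, a1, a2, a3, a4, a5, a6⟩ :=
        seg_path_surgery hm3 hfinj hfadj q hqp hsupC (i+1) (m-1) (by omega) (by omega)
          h1 hchord.symm
      refine win L hne a1 a2 a3 a4 ?_ (a5 v q.start_mem_support)
      rintro x ⟨l, rfl⟩ _
      obtain ⟨t, htm, rfl⟩ := exists_off hm3 (i+1) l
      exact a6 t (by omega)
    -- successors of neighbours of v on C are light
    have hsucc_inj : Function.Injective (fun j : ZMod m => f (j + 1)) :=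
      fun a b h => by simpa using hfinj h
    have hAplight : ∀ i ∈ Ai, ¬ Heavy G (f (i + 1)) := by
      intro i hi hheavy
      have hdisjE : ∀ y ∈ R ∪ ((fun j : ZMod m => f (j + 1)) '' (Ai : Set (ZMod m))),
          ¬ G.Adj (f (i+1)) y := by
        rintro y (hy | ⟨j, hjA, rfl⟩)
        · exact q3 i hi y hy
        · rcases eq_or_ne i j with rfl | hij
          · exact fun h => G.irrefl h
          · exact q2 i hi j hjA hij
      have hcount := nsub (f (i+1)) _ hdisjE
      have hScard : ((fun j : ZMod m => f (j + 1)) '' (Ai : Set (ZMod m))).ncard = k := by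
        rw [Set.ncard_image_of_injective _ hsucc_inj, Set.ncard_coe_finset]
      have hU : (R ∪ ((fun j : ZMod m => f (j + 1)) '' (Ai : Set (ZMod m)))).ncard
          = R.ncard + k := by
        rw [Set.ncard_union_eq ?_ (Set.toFinite _) (Set.toFinite _), hScard]
        rw [Set.disjoint_left]
        rintro y hyR ⟨j, _, rfl⟩
        exact hRC _ hyR ⟨j + 1, rfl⟩
      have hy2 : n ≤ 2 * (G.neighborSet (f (i+1))).ncard := hheavy
      have hv2 : n ≤ 2 * (G.neighborSet v).ncard := hvH
      omega
    by_cases hallA : ∀ i : ZMod m, f i ∈ H → i ∈ Ai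
    · -- all heavy vertices of C are neighbours of v ; find the next neighbour after ia0
      have hQex : ∃ t : ℕ, (ia0 + ((t + 1 : ℕ) : ZMod m)) ∈ Ai ∧ t + 1 ≤ m := by
        refine ⟨m - 1, ?_, by omega⟩
        have he : (m - 1 + 1 : ℕ) = m := by omega
        rw [he, ZMod.natCast_self, add_zero]
        exact hia0A
      set D := Nat.find hQex + 1 with hDdef
      have hfind := Nat.find_spec hQex
      have hDA : (ia0 + (D : ZMod m)) ∈ Ai := hfind.1
      have hDle : D ≤ m := hfind.2
      have hDmin : ∀ s, 1 ≤ s → s < D → (ia0 + (s : ZMod m)) ∉ Ai := by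
        intro s h1 h2 hcon
        have := Nat.find_min hQex (m := s - 1) (by omega)
        have he : s - 1 + 1 = s := by omega
        rw [he] at this
        exact this ⟨hcon, by omega⟩
      by_cases hDm : D = m
      · -- here Ai = {ia0} and every heavy vertex of C equals f ia0
        have hAone : ∀ j ∈ Ai, j = ia0 := by
          intro j hj
          by_contra hne
          obtain ⟨t, htm, hteq⟩ := exists_off hm3 ia0 j
          have ht1 : 1 ≤ t := by
            rcases Nat.eq_zero_or_pos t with rfl | h
            · exact absurd (by rw [hteq]; simp) hne
            · exact h
          exact hDmin t ht1 (by omega) (hteq ▸ hj)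
        -- a crossing edge from R to the cycle avoiding f ia0
        have hne1 : f (ia0 + 1) ≠ f ia0 := by
          intro h
          have h2 : f (ia0 + ((1 : ℕ) : ZMod m)) = f (ia0 + ((0 : ℕ) : ZMod m)) := by
            simpa using h
          have := off_inj hfinj h2 (by omega) (by omega)
          omega
        obtain ⟨p0, _, hp0s⟩ := conn_walk h2conn (x := f ia0) (hvne ia0) hne1
        obtain ⟨w, u, hwR, huC, huNe, hwu⟩ :=
          cross_walk hRclose hRC (f ia0) p0 hvR ⟨ia0 + 1, rfl⟩ hp0s
        obtain ⟨iu, rfl⟩ := huC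
        obtain ⟨q, hqp, hqR⟩ := hRpath w hwR
        have hsupC : ∀ y ∈ q.support, ∀ l : ZMod m, y ≠ f l := by
          intro y hy l hyl
          exact hRC y (hqR y hy) ⟨l, hyl.symm⟩
        have hiune : iu ≠ ia0 := fun h => huNe (by rw [h])
        have he1 : 1 ≤ ((ia0 - iu : ZMod m)).val := by
          rcases Nat.eq_zero_or_pos ((ia0 - iu : ZMod m)).val with h | h
          · exfalso
            have := base_off hm3 iu ia0
            rw [h] at this
            simp at this
            exact hiune this.symm
          · exact h
        have h1 : G.Adj (f (iu + ((((ia0 - iu : ZMod m)).val : ℕ) : ZMod m))) v := by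
          rw [← base_off hm3 iu ia0]
          exact (hadjA _ hia0A).symm
        obtain ⟨L, hne, a1, a2, a3, a4, a5, a6⟩ :=
          seg_path_surgery hm3 hfinj hfadj q hqp hsupC iu ((ia0 - iu : ZMod m)).val
            (ZMod.val_lt _) he1 h1 hwu
        refine win L hne a1 a2 a3 a4 ?_ (a5 v q.start_mem_support)
        rintro x ⟨l, rfl⟩ hxH
        have hl : l = ia0 := hAone l (hallA l hxH)
        have he2 : f l = f (iu + ((((ia0 - iu : ZMod m)).val : ℕ) : ZMod m)) := by
          rw [hl, ← base_off hm3 iu ia0]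
        rw [he2]
        exact a6 _ (le_refl _)
      · -- k ≥ 2 : drop the (heavy-free) interior between ia0 and the next neighbour
        have hDm' : D < m := by omega
        have hne0 : ∀ s, 1 ≤ s → s < D → f (ia0 + (s : ZMod m)) ∉ H := by
          intro s hs1 hs2 hcon
          exact hDmin s hs1 hs2 (hallA _ hcon)
        have h1 : G.Adj v (f (ia0 + (D : ZMod m))) := hadjA _ hDA
        have hidx : (ia0 + (D : ZMod m)) + ((m - D : ℕ) : ZMod m) = ia0 := by
          rw [Nat.cast_sub (by omega : D ≤ m), ZMod.natCast_self]
          ring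
        have h2 : G.Adj (f ((ia0 + (D : ZMod m)) + ((m - D : ℕ) : ZMod m))) v := by
          rw [hidx]
          exact (hadjA _ hia0A).symm
        obtain ⟨L, hne, a1, a2, a3, a4, a5, a6⟩ :=
          vtx_seg_surgery hm3 hfinj hfadj v hvne (ia0 + (D : ZMod m)) (m - D)
            (by omega) (by omega) h1 h2
        refine win L hne a1 a2 a3 a4 ?_ a5
        rintro x ⟨l, rfl⟩ hxH
        obtain ⟨t, htm, rfl⟩ := exists_off hm3 ia0 l
        rcases Nat.eq_zero_or_pos t with rfl | ht
        · have he2 : f (ia0 + ((0 : ℕ) : ZMod m)) =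
              f ((ia0 + (D : ZMod m)) + ((m - D : ℕ) : ZMod m)) := by
            rw [hidx]
            simp
          rw [he2]
          exact a6 (m - D) (le_refl _)
        · by_cases hcor : t < D
          · exact absurd hxH (hne0 t ht hcor)
          · have he2 : f (ia0 + (t : ZMod m)) =
                f ((ia0 + (D : ZMod m)) + ((t - D : ℕ) : ZMod m)) := by
              congr 1
              rw [Nat.cast_sub (by omega : D ≤ t)]
              ring
            rw [he2]
            exact a6 (t - D) (by omega)
    · -- the main case : a heavy vertex on C not adjacent to v
      push_neg at hallA
      obtain ⟨i0, hi0H, hi0A⟩ := hallA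
      -- the nearest neighbour of v backwards from i0
      have hSex : ∃ s : ℕ, (i0 - ((s + 1 : ℕ) : ZMod m)) ∈ Ai ∧ s + 1 ≤ m - 1 := by
        have hv1 : 1 ≤ ((i0 - ia0 : ZMod m)).val := by
          rcases Nat.eq_zero_or_pos ((i0 - ia0 : ZMod m)).val with h | h
          · exfalso
            have hb := base_off hm3 ia0 i0
            rw [h] at hb
            simp at hb
            exact hi0A (hb ▸ hia0A)
          · exact h
        refine ⟨((i0 - ia0 : ZMod m)).val - 1, ?_, ?_⟩
        · have he : ((i0 - ia0 : ZMod m)).val - 1 + 1 = ((i0 - ia0 : ZMod m)).val := by omega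
          rw [he]
          have hb := base_off hm3 ia0 i0
          have he2 : i0 - ((((i0 - ia0 : ZMod m)).val : ℕ) : ZMod m) = ia0 := by
            exact sub_eq_iff_eq_add.mpr hb
          rw [he2]
          exact hia0A
        · have := ZMod.val_lt (i0 - ia0 : ZMod m)
          omega
      set dstar := Nat.find hSex + 1 with hdstardef
      have hSfind := Nat.find_spec hSex
      have hjaA : (i0 - ((dstar : ℕ) : ZMod m)) ∈ Ai := hSfind.1
      have hdstarle : dstar ≤ m - 1 := hSfind.2
      have hSmin : ∀ u, 1 ≤ u → u < dstar → (i0 - ((u : ℕ) : ZMod m)) ∉ Ai := by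
        intro u h1 h2 hcon
        have := Nat.find_min hSex (m := u - 1) (by omega)
        have he : u - 1 + 1 = u := by omega
        rw [he] at this
        exact this ⟨hcon, by omega⟩
      set ja : ZMod m := i0 - ((dstar : ℕ) : ZMod m) with hjadef
      have hja_i0 : ja + ((dstar : ℕ) : ZMod m) = i0 := by rw [hjadef]; ring
      -- the first heavy-or-neighbour hit forwards from ja
      have hTex : ∃ t : ℕ, (f (ja + ((t + 1 : ℕ) : ZMod m)) ∈ H ∨
          (ja + ((t + 1 : ℕ) : ZMod m)) ∈ Ai) ∧ t + 1 ≤ dstar := by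
        refine ⟨dstar - 1, ?_, by omega⟩
        have he : dstar - 1 + 1 = dstar := by omega
        rw [he, hja_i0]
        exact Or.inl hi0H
      set D := Nat.find hTex + 1 with hDdef
      have hTfind := Nat.find_spec hTex
      have hDle : D ≤ dstar := hTfind.2
      have hD1 : 1 ≤ D := by omega
      have hDm : D < m := by omega
      have hTmin : ∀ s, 1 ≤ s → s < D →
          f (ja + ((s : ℕ) : ZMod m)) ∉ H ∧ (ja + ((s : ℕ) : ZMod m)) ∉ Ai := by
        intro s h1 h2
        have hmin := Nat.find_min hTex (m := s - 1) (by omega)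
        have he : s - 1 + 1 = s := by omega
        rw [he] at hmin
        constructor
        · intro hcon; exact hmin ⟨Or.inl hcon, by omega⟩
        · intro hcon; exact hmin ⟨Or.inr hcon, by omega⟩
      set iy : ZMod m := ja + ((D : ℕ) : ZMod m) with hiydef
      have hyA : iy ∉ Ai := by
        rcases Nat.lt_or_ge D dstar with h | h
        · have he : iy = i0 - (((dstar - D : ℕ) : ℕ) : ZMod m) := by
            rw [hiydef, ← hja_i0, Nat.cast_sub (by omega : D ≤ dstar)]
            ring
          rw [he]
          exact hSmin (dstar - D) (by omega) (by omega)
        · have hDd : D = dstar := by omega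
          have he : iy = i0 := by rw [hiydef, hDd, hja_i0]
          rw [he]
          exact hi0A
      have hyH : f iy ∈ H := by
        rcases hTfind.1 with h | h
        · exact h
        · exact absurd h hyA
      have hyheavy : Heavy G (f iy) := hyH
      set Ee := m - D with hEedef
      have hEe1 : 1 ≤ Ee := by omega
      have hEem : Ee < m := by omega
      have hidx : iy + ((Ee : ℕ) : ZMod m) = ja := by
        rw [hiydef, hEedef, Nat.cast_sub (by omega : D ≤ m), ZMod.natCast_self]
        ring
      have hjaA' : ja ∈ Ai := hjaA
      -- coverage helper : every heavy vertex of the cycle is at offset 0 or ≥ D from ja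
      have hcover : ∀ l : ZMod m, f l ∈ H → ∃ t : ℕ, t ≤ Ee ∧ f l = f (iy + ((t : ℕ) : ZMod m)) := by
        intro l hlH
        obtain ⟨t, htm, rfl⟩ := exists_off hm3 ja l
        rcases Nat.eq_zero_or_pos t with rfl | ht
        · refine ⟨Ee, le_refl _, ?_⟩
          rw [hidx]
          simp
        · by_cases hcor : t < D
          · exact absurd hlH (hTmin t ht hcor).1
          · refine ⟨t - D, by omega, ?_⟩
            congr 1
            rw [hiydef, Nat.cast_sub (by omega : D ≤ t)]
            ring
      -- W5 : the heavy vertex f iy has no neighbour in R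
      have hW5 : ∀ w ∈ R, ¬ G.Adj (f iy) w := by
        intro w hw hchord
        obtain ⟨q, hqp, hqR⟩ := hRpath w hw
        have hsupC : ∀ y ∈ q.support, ∀ l : ZMod m, y ≠ f l := by
          intro y hy l hyl
          exact hRC y (hqR y hy) ⟨l, hyl.symm⟩
        have h1 : G.Adj (f (iy + ((Ee : ℕ) : ZMod m))) v := by
          rw [hidx]
          exact (hadjA _ hjaA').symm
        obtain ⟨L, hne, a1, a2, a3, a4, a5, a6⟩ :=
          seg_path_surgery hm3 hfinj hfadj q hqp hsupC iy Ee hEem hEe1 h1 hchord.symm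
        refine win L hne a1 a2 a3 a4 ?_ (a5 v q.start_mem_support)
        rintro x ⟨l, rfl⟩ hxH
        obtain ⟨t, ht, he⟩ := hcover l hxH
        rw [he]
        exact a6 t ht
      -- v is not adjacent to f iy
      have hvy : ¬ G.Adj v (f iy) := fun h => hyA ((hAimem iy).mpr h)
      -- W7 : f iy is not adjacent to the successor of any other neighbour of v on C
      have hW7 : ∀ j ∈ Ai, j ≠ ja → ¬ G.Adj (f iy) (f (j + 1)) := by
        intro j hj hjne hchord
        obtain ⟨c, hcm, hceq⟩ := exists_off hm3 ja j
        have hc0 : c ≠ 0 := by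
          intro h
          rw [h] at hceq
          simp at hceq
          exact hjne hceq
        have hcD : ¬ c < D := by
          intro h
          exact (hTmin c (by omega) h).2 (hceq ▸ hj)
        have hcDne : c ≠ D := by
          intro h
          rw [h, ← hiydef] at hceq
          exact hyA (hceq ▸ hj)
        have h1 : G.Adj v (f (iy + ((Ee : ℕ) : ZMod m))) := by
          rw [hidx]
          exact hadjA _ hjaA'
        have hoff1 : iy + (((c - D) + 1 : ℕ) : ZMod m) = j + 1 := by
          rw [hiydef, hceq]
          push_cast [Nat.cast_sub (by omega : D ≤ c)]
          ring
        have hoff2 : iy + ((c - D : ℕ) : ZMod m) = j := by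
          rw [hiydef, hceq]
          push_cast [Nat.cast_sub (by omega : D ≤ c)]
          ring
        have h2 : G.Adj (f (iy + (((c - D) + 1 : ℕ) : ZMod m))) (f iy) := by
          rw [hoff1]
          exact hchord.symm
        have h3 : G.Adj (f (iy + ((c - D : ℕ) : ZMod m))) v := by
          rw [hoff2]
          exact (hadjA j hj).symm
        obtain ⟨L, hne, a1, a2, a3, a4, a5, a6⟩ :=
          two_seg_surgery hm3 hfinj hfadj v hvne iy (c - D) Ee (by omega) hEem h1 h2 h3
        refine win L hne a1 a2 a3 a4 ?_ a5
        rintro x ⟨l, rfl⟩ hxH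
        obtain ⟨t, ht, he⟩ := hcover l hxH
        rw [he]
        exact a6 t ht
      -- the final count
      have hynA : ∀ j ∈ Ai, f iy ≠ f (j + 1) := by
        intro j hj hcon
        exact hAplight j hj (hcon ▸ hyheavy)
      have hdisjE : ∀ y ∈ (R ∪ ((fun j : ZMod m => f (j + 1)) ''
          ((Ai.erase ja : Finset (ZMod m)) : Set (ZMod m)))) ∪ {f iy},
          ¬ G.Adj (f iy) y := by
        rintro y (hy | hy)
        · rcases hy with hy | ⟨j, hjmem, rfl⟩
          · exact hW5 y hy
          · obtain ⟨hjne, hjA⟩ := Finset.mem_erase.mp hjmem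
            exact hW7 j hjA hjne
        · rw [Set.mem_singleton_iff] at hy
          subst hy
          exact fun h => G.irrefl h
      have hcount := nsub (f iy) _ hdisjE
      have hS2card : (((fun j : ZMod m => f (j + 1)) ''
          ((Ai.erase ja : Finset (ZMod m)) : Set (ZMod m)))).ncard = k - 1 := by
        rw [Set.ncard_image_of_injective _ hsucc_inj, Set.ncard_coe_finset,
          Finset.card_erase_of_mem hjaA']
      have hUcard : ((R ∪ ((fun j : ZMod m => f (j + 1)) ''
          ((Ai.erase ja : Finset (ZMod m)) : Set (ZMod m)))) ∪ {f iy}).ncard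
          = R.ncard + (k - 1) + 1 := by
        rw [Set.ncard_union_eq ?_ (Set.toFinite _) (Set.toFinite _),
          Set.ncard_union_eq ?_ (Set.toFinite _) (Set.toFinite _), hS2card, Set.ncard_singleton]
        · rw [Set.disjoint_left]
          rintro y hyR ⟨j, _, rfl⟩
          exact hRC _ hyR ⟨j + 1, rfl⟩
        · rw [Set.disjoint_left]
          rintro y (hyR | ⟨j, hjmem, rfl⟩) hy2
          · rw [Set.mem_singleton_iff] at hy2
            subst hy2
            exact hRC _ hyR ⟨iy, rfl⟩
          · rw [Set.mem_singleton_iff] at hy2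
            exact hynA j (Finset.mem_of_mem_erase hjmem) hy2.symm
      have hy2 : n ≤ 2 * (G.neighborSet (f iy)).ncard := hyheavy
      have hv2 : n ≤ 2 * (G.neighborSet v).ncard := hvH
      omega
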